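/- Weighted retrieval (regularized form of Corollary 3, part 1): let h_1, …, h_t be pairwise distinct vectors in ℝ^d and let p_1, …, p_t > 0 satisfy Σ_k p_k = 1. For every index j ∈ {1, …, t}, as σ → 0⁺ the quantity (4πσ)^{d/2} ∫_{ℝ^d} S(θ) · conj(w_j(θ)) · e^{−σ‖θ‖²} dθ (integrated componentwise in ℂ^d) converges to p_j · h_j. -/

import Mathlib

open MeasureTheory Real Filter RealInnerProductSpace

/-- The weighted derivative characteristic summary
`S(θ) = i ∑ₖ pₖ hₖ e^{i⟨θ,hₖ⟩}` (componentwise). -/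
noncomputable def weightedSummary {d t : ℕ} (h : Fin t → EuclideanSpace ℝ (Fin d))
    (p : Fin t → ℝ) (θ : EuclideanSpace ℝ (Fin d)) : Fin d → ℂ :=
  fun l => Complex.I *
    ∑ k, (p k : ℂ) * (h k l : ℂ) * Complex.exp (Complex.I * (⟪θ, h k⟫ : ℝ))

/-- The spectral query `w_j(θ) = (i/(2π)^d) e^{i⟨θ,h_j⟩}`. -/
noncomputable def weightedQuery {d t : ℕ} (h : Fin t → EuclideanSpace ℝ (Fin d))
    (j : Fin t) (θ : EuclideanSpace ℝ (Fin d)) : ℂ :=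
  (Complex.I / ((2 * Real.pi) ^ d : ℝ)) *
    Complex.exp (Complex.I * (⟪θ, h j⟫ : ℝ))

/-- **Weighted retrieval (regularized form of Corollary 3, part 1).**
For pairwise distinct `h₁, …, h_t ∈ ℝ^d` with weights `pₖ > 0` summing to `1`,
and every index `j`, as `σ → 0⁺` the Gaussian-regularized readout
`(4πσ)^{d/2} ∫ S(θ) * conj (w_j θ) * e^{−σ‖θ‖²} dθ` converges to `p_j • h_j`. -/
theorem weighted_retrieval
    (d t : ℕ) (h : Fin t → EuclideanSpace ℝ (Fin d)) (hdist : Function.Injective h)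
    (p : Fin t → ℝ) (hp : ∀ k, 0 < p k) (hsum : ∑ k, p k = 1) (j : Fin t) :
    Tendsto
      (fun σ : ℝ =>
        ((4 * Real.pi * σ) ^ ((d : ℝ) / 2) : ℝ) •
          ∫ θ : EuclideanSpace ℝ (Fin d),
            (fun l : Fin d =>
              weightedSummary h p θ l * (starRingEnd ℂ) (weightedQuery h j θ) *
                (Real.exp (-σ * ‖θ‖ ^ 2) : ℂ)))
      (nhdsWithin 0 (Set.Ioi 0))
      (nhds (fun l : Fin d => (p j : ℂ) * (h j l : ℂ))) := by
  have hπ : (0:ℝ) < π := Real.pi_pos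
  have hc0 : (((2 * π) ^ d : ℝ) : ℂ) ≠ 0 := Complex.ofReal_ne_zero.mpr (by positivity)
  set g : ℝ → Fin d → ℂ := fun σ l =>
    ∑ k, (p k : ℂ) * (h k l : ℂ) * (Real.exp (-(‖h k - h j‖^2) / (4*σ)) : ℂ) with hg
  have key : ∀ σ ∈ Set.Ioi (0:ℝ),
      g σ = ((4 * Real.pi * σ) ^ ((d : ℝ) / 2) : ℝ) •
          ∫ θ : EuclideanSpace ℝ (Fin d),
            (fun l : Fin d =>
              weightedSummary h p θ l * (starRingEnd ℂ) (weightedQuery h j θ) *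
                (Real.exp (-σ * ‖θ‖ ^ 2) : ℂ)) := by
    intro σ hσ
    rw [Set.mem_Ioi] at hσ
    have hF : (fun θ : EuclideanSpace ℝ (Fin d) =>
        (fun l : Fin d =>
          weightedSummary h p θ l * (starRingEnd ℂ) (weightedQuery h j θ) *
            (Real.exp (-σ * ‖θ‖ ^ 2) : ℂ))) =
        fun θ => ∑ k, Complex.exp (-(σ:ℂ) * ‖θ‖^2 + Complex.I * (⟪h k - h j, θ⟫ : ℝ)) •
          (fun l : Fin d => (p k : ℂ) * (h k l : ℂ) / ((2 * π) ^ d : ℝ)) := by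
      funext θ l
      simp only [weightedSummary, weightedQuery, Finset.sum_apply, Pi.smul_apply,
        smul_eq_mul, map_mul, map_div₀, Complex.conj_I, Complex.conj_ofReal,
        ← Complex.exp_conj, map_mul, Complex.conj_I, Complex.conj_ofReal]
      rw [Finset.mul_sum, Finset.sum_mul, Finset.sum_mul]
      refine Finset.sum_congr rfl fun k _ => ?_
      have hinner : (⟪h k - h j, θ⟫ : ℝ) = ⟪θ, h k⟫ - ⟪θ, h j⟫ := by
        rw [real_inner_comm]; exact inner_sub_right θ (h k) (h j)
      rw [hinner]
      push_cast
      rw [show Complex.I * ((⟪θ, h k⟫ : ℝ) - (⟪θ, h j⟫ : ℝ) : ℂ) =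
        Complex.I * (⟪θ, h k⟫ : ℝ) + (-Complex.I * (⟪θ, h j⟫ : ℝ)) by ring]
      rw [Complex.exp_add, Complex.exp_add]
      linear_combination (-((p k : ℂ) * (h k l : ℂ) * Complex.exp (Complex.I * (⟪θ, h k⟫ : ℝ)) *
        Complex.exp (-Complex.I * (⟪θ, h j⟫ : ℝ)) * Complex.exp (-(σ:ℂ) * ‖θ‖^2) *
        ((2 * (π:ℂ)) ^ d)⁻¹)) * Complex.I_sq
    rw [hF]
    have hint : ∀ k : Fin t, Integrable (fun θ : EuclideanSpace ℝ (Fin d) =>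
        Complex.exp (-(σ:ℂ) * ‖θ‖^2 + Complex.I * (⟪h k - h j, θ⟫ : ℝ))) := fun k =>
      GaussianFourier.integrable_cexp_neg_mul_sq_norm_add (by simpa using hσ) Complex.I (h k - h j)
    rw [integral_finset_sum _ (fun k _ => (hint k).smul_const _)]
    have hval : ∀ k : Fin t,
        (∫ θ : EuclideanSpace ℝ (Fin d),
          Complex.exp (-(σ:ℂ) * ‖θ‖^2 + Complex.I * (⟪h k - h j, θ⟫ : ℝ))) =
        ((π:ℂ) / (σ:ℂ)) ^ ((d:ℂ) / 2) * (Real.exp (-(‖h k - h j‖^2) / (4*σ)) : ℂ) := by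
      intro k
      have := GaussianFourier.integral_cexp_neg_mul_sq_norm_add
        (V := EuclideanSpace ℝ (Fin d)) (b := (σ:ℂ)) (by simpa using hσ) Complex.I (h k - h j)
      simp only [finrank_euclideanSpace, Fintype.card_fin] at this
      rw [this]
      rw [Complex.I_sq, Complex.ofReal_exp]
      congr 2
      push_cast
      ring
    simp_rw [integral_smul_const, hval]
    have hconst : ((((4 * π * σ) ^ ((d:ℝ)/2) : ℝ)) : ℂ) * ((π:ℂ)/(σ:ℂ)) ^ ((d:ℂ)/2)
        = (((2*π)^d : ℝ) : ℂ) := by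
      have h1 : ((π:ℂ)/(σ:ℂ)) ^ ((d:ℂ)/2) = ((((π/σ) ^ ((d:ℝ)/2) : ℝ)) : ℂ) := by
        rw [Complex.ofReal_cpow (by positivity)]
        push_cast; ring_nf
      rw [h1, ← Complex.ofReal_mul, ← Real.rpow_natCast (2*π) d]
      congr 1
      rw [← Real.mul_rpow (by positivity) (by positivity)]
      have h2 : 4 * π * σ * (π / σ) = (2*π)^(2:ℕ) := by field_simp; ring
      rw [h2, ← Real.rpow_natCast (2*π) 2, ← Real.rpow_mul (by positivity)]
      congr 1
      push_cast
      ring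
    funext l
    simp only [hg, Pi.smul_apply, Finset.smul_sum, Finset.sum_apply, Pi.smul_apply, smul_eq_mul,
      Complex.real_smul]
    refine Finset.sum_congr rfl fun k _ => ?_
    have hconst' : ((((4 * π * σ) ^ ((d:ℝ)/2) : ℝ)) : ℂ) * ((π:ℂ)/(σ:ℂ)) ^ ((d:ℂ)/2) *
        ((((2 * π) ^ d : ℝ)) : ℂ)⁻¹ = 1 := (mul_inv_eq_one₀ hc0).mpr hconst
    linear_combination (-((p k : ℂ) * (h k l : ℂ) *
      (Real.exp (-(‖h k - h j‖^2) / (4*σ)) : ℂ))) * hconst'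
  apply Tendsto.congr' (eventuallyEq_of_mem self_mem_nhdsWithin key)
  rw [tendsto_pi_nhds]
  intro l
  have main : Tendsto (fun σ : ℝ => g σ l) (nhdsWithin 0 (Set.Ioi 0))
      (nhds (∑ k, if k = j then (p k : ℂ) * (h k l : ℂ) else 0)) := by
    apply tendsto_finset_sum
    intro k _
    by_cases hk : k = j
    · subst hk
      simp only [if_pos rfl, sub_self, norm_zero]
      simpa using tendsto_const_nhds (x := (p k : ℂ) * (h k l : ℂ))
        (f := nhdsWithin (0:ℝ) (Set.Ioi 0))
    · rw [if_neg hk]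
      have hnorm : (0:ℝ) < ‖h k - h j‖^2 := by
        have hne : h k - h j ≠ 0 := sub_ne_zero.mpr (fun e => hk (hdist e))
        have := norm_pos_iff.mpr hne
        positivity
      have h1 : Tendsto (fun σ : ℝ => -(‖h k - h j‖^2) / (4*σ)) (nhdsWithin 0 (Set.Ioi 0)) atBot := by
        have h4 : Tendsto (fun σ : ℝ => 4*σ) (nhdsWithin 0 (Set.Ioi 0)) (nhdsWithin 0 (Set.Ioi 0)) := by
          apply tendsto_nhdsWithin_of_tendsto_nhds_of_eventually_within
          · have h40 : Tendsto (fun σ : ℝ => 4*σ) (nhds 0) (nhds 0) := by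
              have : Continuous (fun σ : ℝ => 4*σ) := continuous_const.mul continuous_id
              simpa using this.tendsto 0
            exact h40.mono_left nhdsWithin_le_nhds
          · filter_upwards [self_mem_nhdsWithin] with σ hσ
            exact mul_pos (by norm_num : (0:ℝ) < 4) hσ
        have hinv : Tendsto (fun σ : ℝ => (4*σ)⁻¹) (nhdsWithin 0 (Set.Ioi 0)) atTop :=
          tendsto_inv_nhdsGT_zero.comp h4
        have hmul : Tendsto (fun σ : ℝ => (‖h k - h j‖^2) * (4*σ)⁻¹)
            (nhdsWithin 0 (Set.Ioi 0)) atTop := hinv.const_mul_atTop hnorm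
        have := tendsto_neg_atBot_iff.mpr hmul
        refine this.congr fun σ => ?_
        rw [neg_div, div_eq_mul_inv]
      have h2 : Tendsto (fun σ : ℝ => (Real.exp (-(‖h k - h j‖^2) / (4*σ)) : ℂ))
          (nhdsWithin 0 (Set.Ioi 0)) (nhds 0) := by
        rw [show (0:ℂ) = ((0:ℝ):ℂ) by norm_num]
        exact (Complex.continuous_ofReal.tendsto 0).comp (Real.tendsto_exp_atBot.comp h1)
      simpa using (tendsto_const_nhds (x := (p k : ℂ) * (h k l : ℂ))).mul h2
  simpa [Finset.sum_ite_eq'] using main
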